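/- Let A be a finitely generated abelian group, R = ℂ[A] its group algebra over ℂ, ε : R → ℂ the augmentation homomorphism (induced by the trivial character), and ρ : A → ℂ* a character with ρ ≠ 1, inducing the ring homomorphism R → ℂ. Let ℂ_ρ and ℂ_ε denote ℂ viewed as an R-module via ρ and via ε respectively. Then Tor_n^R(ℂ_ρ, ℂ_ε) = 0 for all n ≥ 0. -/

import Mathlib

open CategoryTheory

/-- `ℂ` as a module over the group algebra `ℂ[A]`, via a ring homomorphism
`ℂ[A] → ℂ` (e.g. the one induced by a character of `A` or the augmentation). -/
noncomputable def charModule (A : Type) [CommGroup A]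
    (f : MonoidAlgebra ℂ A →+* ℂ) : ModuleCat (MonoidAlgebra ℂ A) :=
  letI : Module (MonoidAlgebra ℂ A) ℂ := Module.compHom ℂ f
  ModuleCat.of (MonoidAlgebra ℂ A) ℂ

lemma charModule_smul_def (A : Type) [CommGroup A] (f : MonoidAlgebra ℂ A →+* ℂ)
    (r : MonoidAlgebra ℂ A) (x : ℂ) :
    r • (show charModule A f from x) = (show charModule A f from f r * x) := rfl

lemma charModule_smul_id (A : Type) [CommGroup A] (f : MonoidAlgebra ℂ A →+* ℂ)
    {r : MonoidAlgebra ℂ A} (h : f r = 1) :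
    r • 𝟙 (charModule A f) = 𝟙 (charModule A f) := by
  ext x
  show r • x = x
  refine (charModule_smul_def A f r x).trans ?_
  rw [h]
  exact one_mul (M := ℂ) x

lemma charModule_smul_eq_zero (A : Type) [CommGroup A] (f : MonoidAlgebra ℂ A →+* ℂ)
    (X : ModuleCat (MonoidAlgebra ℂ A)) (g : X ⟶ charModule A f)
    {r : MonoidAlgebra ℂ A} (h : f r = 0) : r • g = 0 := by
  ext x
  show r • g x = 0
  refine (charModule_smul_def A f r (g x)).trans ?_
  rw [h]
  exact zero_mul (M₀ := ℂ) _

/-- Let `A` be a finitely generated abelian group, `R = ℂ[A]` its group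
algebra, `ε : R → ℂ` the augmentation, and `ρ : A → ℂ*` a nontrivial character.  Then
`Tor_n^R(ℂ_ρ, ℂ_ε) = 0` for all `n ≥ 0`. -/
theorem stmt_13 (A : Type) [CommGroup A] [Group.FG A]
    (ρ : A →* ℂˣ) (hρ : ρ ≠ 1) (n : ℕ) :
    Subsingleton
      (((Tor (ModuleCat (MonoidAlgebra ℂ A)) n).obj
          (charModule A (MonoidAlgebra.lift ℂ ℂ A ((Units.coeHom ℂ).comp ρ)).toRingHom)).obj
        (charModule A (MonoidAlgebra.lift ℂ ℂ A (1 : A →* ℂ)).toRingHom)) := by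
  classical
  set R := MonoidAlgebra ℂ A
  set fρ := (MonoidAlgebra.lift ℂ ℂ A ((Units.coeHom ℂ).comp ρ)).toRingHom with hfρ
  set fε := (MonoidAlgebra.lift ℂ ℂ A (1 : A →* ℂ)).toRingHom with hfε
  set M := charModule A fρ with hM
  set N := charModule A fε with hN
  obtain ⟨a, ha⟩ : ∃ a : A, ρ a ≠ 1 := by
    by_contra h
    push_neg at h
    exact hρ (MonoidHom.ext fun a => h a)
  set c : ℂ := (ρ a : ℂ) - 1 with hc
  have hc0 : c ≠ 0 := by
    intro h
    apply ha
    ext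
    have : (ρ a : ℂ) = 1 := by linear_combination h
    simpa using this
  set r : R := MonoidAlgebra.of ℂ A a - 1 with hr
  have hfρr : fρ r = c := by simp [hr, hfρ, hc]
  have hfεr : fε r = 0 := by simp [hr, hfε]
  set r' : R := algebraMap ℂ R c⁻¹ with hr'
  have hfρr' : fρ (r' * r) = 1 := by
    rw [map_mul, hfρr, hr', hfρ]
    rw [AlgHom.toRingHom_eq_coe, RingHom.coe_coe, AlgHom.commutes]
    simp [Algebra.algebraMap_self]
    exact inv_mul_cancel₀ hc0
  -- the key endomorphism of M
  set gM : M ⟶ M := r • 𝟙 M with hgM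
  haveI : IsIso gM := by
    refine ⟨⟨r' • 𝟙 M, ?_, ?_⟩⟩
    · rw [hgM, Linear.smul_comp, Linear.comp_smul, Category.id_comp, smul_smul,
        mul_comm r r']
      exact charModule_smul_id A fρ hfρr'
    · rw [hgM, Linear.smul_comp, Linear.comp_smul, Category.id_comp, smul_smul]
      exact charModule_smul_id A fρ hfρr'
  set F := (MonoidalCategory.tensoringLeft (ModuleCat R)).obj M with hF
  let P : ProjectiveResolution N := (HasProjectiveResolution.out (Z := N)).some
  let β : P.complex ⟶ P.complex :=
    { f := fun i => r • 𝟙 _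
      comm' := fun i j _ => by
        rw [Linear.smul_comp, Category.id_comp, Linear.comp_smul, Category.comp_id] }
  have hsingle0 : (ChainComplex.single₀ (ModuleCat R)).map (0 : N ⟶ N) = 0 :=
    Functor.map_zero _ _ _
  have w : β ≫ P.π = P.π ≫ (ChainComplex.single₀ (ModuleCat R)).map (0 : N ⟶ N) := by
    rw [hsingle0, Limits.comp_zero]
    apply HomologicalComplex.hom_ext
    intro i
    rw [HomologicalComplex.comp_f, HomologicalComplex.zero_f]
    match i with
    | 0 =>
      have : β.f 0 ≫ P.π.f 0 = r • P.π.f 0 := by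
        rw [show β.f 0 = r • 𝟙 _ from rfl, Linear.smul_comp, Category.id_comp]
      rw [this]
      exact charModule_smul_eq_zero A fε _ _ hfεr
    | (i+1) =>
      exact (HomologicalComplex.isZero_single_obj_X
        (ComplexShape.down ℕ) 0 N (i+1) (by simp)).eq_of_tgt _ _
  have h1 := F.leftDerived_map_eq n (0 : N ⟶ N) β w
  have h2 := F.leftDerived_map_eq n (0 : N ⟶ N) (0 : P.complex ⟶ P.complex)
    (by rw [hsingle0, Limits.comp_zero, Limits.zero_comp])
  rw [h2] at h1
  have hβ0 : (F.mapHomologicalComplex (ComplexShape.down ℕ) ⋙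
      HomologicalComplex.homologyFunctor (ModuleCat R) (ComplexShape.down ℕ) n).map β = 0 := by
    have := ((Iso.cancel_iso_hom_left (P.isoLeftDerivedObj F n) _ _).mp h1)
    have := (cancel_mono (P.isoLeftDerivedObj F n).inv).mp this
    rw [← this]
    exact Functor.map_zero _ _ _
  set T := ((Tor (ModuleCat R) n).map gM).app N with hT
  haveI : IsIso T := inferInstance
  have hT0 : T = 0 := by
    have happ := ProjectiveResolution.leftDerived_app_eq
      ((MonoidalCategory.tensoringLeft (ModuleCat R)).map gM) P n
    have hchain : (NatTrans.mapHomologicalComplex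
        ((MonoidalCategory.tensoringLeft (ModuleCat R)).map gM)
          (ComplexShape.down ℕ)).app P.complex
        = (F.mapHomologicalComplex (ComplexShape.down ℕ)).map β := by
      apply HomologicalComplex.hom_ext
      intro i
      simp only [NatTrans.mapHomologicalComplex_app_f, Functor.mapHomologicalComplex_map_f]
      show ((MonoidalCategory.tensoringLeft (ModuleCat R)).map gM).app (P.complex.X i)
        = ((MonoidalCategory.tensoringLeft (ModuleCat R)).obj M).map (r • 𝟙 (P.complex.X i))
      rw [hgM]
      simp
    rw [hT]
    show (NatTrans.leftDerived
      ((MonoidalCategory.tensoringLeft (ModuleCat R)).map gM) n).app N = 0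
    rw [happ, hchain]
    have := hβ0
    rw [Functor.comp_map] at this
    rw [this, Limits.zero_comp, Limits.comp_zero]
  have hid : 𝟙 (((Tor (ModuleCat R) n).obj M).obj N) = 0 := by
    calc 𝟙 _ = inv T ≫ T := (IsIso.inv_hom_id T).symm
    _ = inv T ≫ 0 := congrArg (CategoryStruct.comp (inv T)) hT0
    _ = 0 := Limits.comp_zero
  refine ⟨fun x y => ?_⟩
  have hz : ∀ z : (((Tor (ModuleCat R) n).obj M).obj N), z = 0 := by
    intro z
    calc z = (𝟙 (((Tor (ModuleCat R) n).obj M).obj N)) z := rfl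
    _ = (0 : ((Tor (ModuleCat R) n).obj M).obj N ⟶ _) z := by rw [hid]
    _ = 0 := rfl
  rw [hz x, hz y]
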